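/- (Truthful profile is 4-ex post stable under the 1/4-rebate greedy matching) Let G be a finite bipartite graph with surpluses s_{ij} = v_{ij} − c_{ij} on edges. Run the greedy matching on edges with positive surplus (matching edges in decreasing order of surplus, discarding edges with s ≤ 0), and give each matched agent utility equal to 1/4 of the surplus of their matched edge (unmatched agents get 0). Then for every edge {i,j}, u_i + u_j ≥ s_{ij}/4. -/

import Mathlib

/-- Greedy bipartite matching: process edges (bidder, asker pairs) in the given
(decreasing-surplus) order, adding an edge whenever neither endpoint is already
matched. -/
def greedyBip {β γ : Type*} [DecidableEq β] [DecidableEq γ] :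
    List (β × γ) → List (β × γ) → List (β × γ)
  | acc, [] => acc
  | acc, e :: rest =>
    if ∀ f ∈ acc, e.1 ≠ f.1 ∧ e.2 ≠ f.2 then greedyBip (e :: acc) rest
    else greedyBip acc rest

lemma greedyBip_acc_subset {β γ : Type*} [DecidableEq β] [DecidableEq γ]
    (L : List (β × γ)) : ∀ acc, ∀ f ∈ acc, f ∈ greedyBip acc L := by
  induction L with
  | nil => intro acc f hf; simpa [greedyBip] using hf
  | cons e rest ih =>
    intro acc f hf
    by_cases h : ∀ g ∈ acc, e.1 ≠ g.1 ∧ e.2 ≠ g.2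
    · rw [greedyBip, if_pos h]; exact ih (e :: acc) f (List.mem_cons_of_mem _ hf)
    · rw [greedyBip, if_neg h]; exact ih acc f hf

lemma greedyBip_mem {β γ : Type*} [DecidableEq β] [DecidableEq γ]
    (L : List (β × γ)) : ∀ acc, ∀ f ∈ greedyBip acc L, f ∈ acc ∨ f ∈ L := by
  induction L with
  | nil => intro acc f hf; left; simpa [greedyBip] using hf
  | cons e rest ih =>
    intro acc f hf
    by_cases h : ∀ g ∈ acc, e.1 ≠ g.1 ∧ e.2 ≠ g.2
    · rw [greedyBip, if_pos h] at hf
      rcases ih _ f hf with h1 | h1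
      · rcases List.mem_cons.1 h1 with rfl | h2
        · right; exact List.mem_cons_self
        · left; exact h2
      · right; exact List.mem_cons_of_mem _ h1
    · rw [greedyBip, if_neg h] at hf
      rcases ih _ f hf with h1 | h1
      · left; exact h1
      · right; exact List.mem_cons_of_mem _ h1

lemma greedyBip_block {β γ : Type*} [DecidableEq β] [DecidableEq γ] (s : β × γ → ℝ) :
    ∀ (L : List (β × γ)), L.Pairwise (fun e f => s f ≤ s e) →
    ∀ acc, (∀ g ∈ acc, ∀ e ∈ L, s e ≤ s g) →
    ∀ e ∈ L, ∃ f ∈ greedyBip acc L, (f.1 = e.1 ∨ f.2 = e.2) ∧ s e ≤ s f := by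
  intro L
  induction L with
  | nil => intro _ acc _ e he; cases he
  | cons e' rest ih =>
    intro hsort acc hacc e he
    have hsr : rest.Pairwise (fun e f => s f ≤ s e) := hsort.of_cons
    have hhead : ∀ x ∈ rest, s x ≤ s e' := fun x hx => List.rel_of_pairwise_cons hsort hx
    by_cases h : ∀ g ∈ acc, e'.1 ≠ g.1 ∧ e'.2 ≠ g.2
    · rw [greedyBip, if_pos h]
      have hacc' : ∀ g ∈ e' :: acc, ∀ x ∈ rest, s x ≤ s g := by
        intro g hg x hx
        rcases List.mem_cons.1 hg with rfl | hg
        · exact hhead x hx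
        · exact hacc g hg x (List.mem_cons_of_mem _ hx)
      rcases List.mem_cons.1 he with rfl | he
      · exact ⟨e, greedyBip_acc_subset rest _ e (List.mem_cons_self),
          Or.inl rfl, le_refl _⟩
      · exact ih hsr (e' :: acc) hacc' e he
    · rw [greedyBip, if_neg h]
      have hacc' : ∀ g ∈ acc, ∀ x ∈ rest, s x ≤ s g :=
        fun g hg x hx => hacc g hg x (List.mem_cons_of_mem _ hx)
      rcases List.mem_cons.1 he with rfl | he
      · push_neg at h
        obtain ⟨g, hg, hgeq⟩ := h
        refine ⟨g, greedyBip_acc_subset rest _ g hg, ?_, hacc g hg e (List.mem_cons_self)⟩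
        by_cases h1 : e.1 = g.1
        · exact Or.inl h1.symm
        · exact Or.inr (hgeq h1).symm
      · exact ih hsr acc hacc' e he

/-- Truthful profile is 4-ex post stable under the 1/4-rebate
greedy matching: run greedy on the positive-surplus edges in decreasing order
of surplus; each matched agent gets utility one quarter of its edge's surplus,
unmatched agents get 0. Then `u_i + u_j ≥ s_{ij}/4` for every edge `{i,j}`. -/
theorem truthful_four_ex_post_stable {β γ : Type*} [DecidableEq β] [DecidableEq γ]
    (E : Finset (β × γ)) (s : β × γ → ℝ)
    (L : List (β × γ)) (hnd : L.Nodup)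
    (hsort : L.Pairwise (fun e f => s f ≤ s e))
    (hL : ∀ e, e ∈ L ↔ e ∈ E ∧ 0 < s e)
    (uB : β → ℝ) (uA : γ → ℝ)
    (huB : ∀ e ∈ greedyBip [] L, uB e.1 = s e / 4)
    (huA : ∀ e ∈ greedyBip [] L, uA e.2 = s e / 4)
    (huB0 : ∀ i, (∀ e ∈ greedyBip [] L, e.1 ≠ i) → uB i = 0)
    (huA0 : ∀ j, (∀ e ∈ greedyBip [] L, e.2 ≠ j) → uA j = 0) :
    ∀ e ∈ E, s e / 4 ≤ uB e.1 + uA e.2 := by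
  have hpos : ∀ f ∈ greedyBip [] L, 0 < s f := by
    intro f hf
    rcases greedyBip_mem L [] f hf with h | h
    · cases h
    · exact ((hL f).1 h).2
  have hBnn : ∀ i, 0 ≤ uB i := by
    intro i
    by_cases h : ∃ f ∈ greedyBip [] L, f.1 = i
    · obtain ⟨f, hf, hfi⟩ := h
      rw [← hfi, huB f hf]
      linarith [hpos f hf]
    · push_neg at h
      rw [huB0 i h]
  have hAnn : ∀ j, 0 ≤ uA j := by
    intro j
    by_cases h : ∃ f ∈ greedyBip [] L, f.2 = j
    · obtain ⟨f, hf, hfj⟩ := h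
      rw [← hfj, huA f hf]
      linarith [hpos f hf]
    · push_neg at h
      rw [huA0 j h]
  intro e heE
  by_cases hse : 0 < s e
  · have heL : e ∈ L := (hL e).2 ⟨heE, hse⟩
    obtain ⟨f, hf, hshare, hle⟩ :=
      greedyBip_block s L hsort [] (by intro g hg; cases hg) e heL
    rcases hshare with h1 | h2
    · have : uB e.1 = s f / 4 := by rw [← h1]; exact huB f hf
      linarith [hAnn e.2]
    · have : uA e.2 = s f / 4 := by rw [← h2]; exact huA f hf
      linarith [hBnn e.1]
  · push_neg at hse
    have := hBnn e.1
    have := hAnn e.2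
    linarith
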